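/- If G is a connected graph of order n and 2 ≤ k ≤ n, then SW_k(G) ≤ ((k-1)(n+1)/(k+1))·C(n,k), with equality when G is a path. -/

import Mathlib

open scoped Classical
open Finset

noncomputable def steinerDist {V : Type*} (G : SimpleGraph V) (S : Finset V) : ℕ :=
  sInf {m : ℕ | ∃ H : G.Subgraph, H.Connected ∧ ↑S ⊆ H.verts ∧ H.edgeSet.ncard = m}

noncomputable def swk {V : Type*} [Fintype V] (k : ℕ) (G : SimpleGraph V) : ℕ :=
  ∑ S ∈ Finset.powersetCard k (Finset.univ : Finset V), steinerDist G S

noncomputable def wswk {V : Type*} [Fintype V] (k : ℕ) (G : SimpleGraph V) (c : V → ℕ) : ℕ :=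
  ∑ S ∈ Finset.powersetCard k (Finset.univ : Finset (Σ v : V, Fin (c v))), steinerDist G (S.image Sigma.fst)

namespace SWAux

/-- parent-function model of a rooted tree on `{1, ..., n}` (root `1`). -/
def GoodPar (par : ℕ → ℕ) : Prop := par 1 = 1 ∧ ∀ i, 2 ≤ i → 1 ≤ par i ∧ par i < i

/-- `i` is an ancestor (or self) of `j`. -/
def anc (par : ℕ → ℕ) (i j : ℕ) : Prop := ∃ t, par^[t] j = i

variable {par : ℕ → ℕ}

lemma anc_refl (i : ℕ) : anc par i i := ⟨0, rfl⟩

lemma anc_step {i j : ℕ} (h : anc par i (par j)) : anc par i j := by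
  obtain ⟨t, ht⟩ := h
  exact ⟨t + 1, by rw [Function.iterate_succ_apply]; exact ht⟩

lemma par_ge_one (hp : GoodPar par) {j : ℕ} (hj : 1 ≤ j) : 1 ≤ par j := by
  rcases Nat.lt_or_ge j 2 with h | h
  · have : j = 1 := by omega
    subst this; rw [hp.1]
  · exact (hp.2 j h).1

lemma par_le (hp : GoodPar par) {j : ℕ} (hj : 1 ≤ j) : par j ≤ j := by
  rcases Nat.lt_or_ge j 2 with h | h
  · have : j = 1 := by omega
    subst this; rw [hp.1]
  · exact le_of_lt (hp.2 j h).2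

lemma iterate_ge_one (hp : GoodPar par) {j : ℕ} (hj : 1 ≤ j) (t : ℕ) : 1 ≤ par^[t] j := by
  induction t with
  | zero => exact hj
  | succ t ih => rw [Function.iterate_succ_apply']; exact par_ge_one hp ih

lemma iterate_le (hp : GoodPar par) {j : ℕ} (hj : 1 ≤ j) (t : ℕ) : par^[t] j ≤ j := by
  induction t with
  | zero => exact le_rfl
  | succ t ih =>
    rw [Function.iterate_succ_apply']
    exact le_trans (par_le hp (iterate_ge_one hp hj t)) ih

lemma anc_le (hp : GoodPar par) {i j : ℕ} (hj : 1 ≤ j) (h : anc par i j) : i ≤ j := by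
  obtain ⟨t, ht⟩ := h; rw [← ht]; exact iterate_le hp hj t

lemma anc_ge_one (hp : GoodPar par) {i j : ℕ} (hj : 1 ≤ j) (h : anc par i j) : 1 ≤ i := by
  obtain ⟨t, ht⟩ := h; rw [← ht]; exact iterate_ge_one hp hj t

lemma anc_of_ne (hp : GoodPar par) {i j : ℕ} (hj : 1 ≤ j) (h : anc par i j) (hne : i ≠ j) :
    2 ≤ j ∧ anc par i (par j) := by
  obtain ⟨t, ht⟩ := h
  have hj2 : 2 ≤ j := by
    by_contra hc
    have hj1 : j = 1 := by omega
    subst hj1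
    have : ∀ s, par^[s] 1 = 1 := by
      intro s
      induction s with
      | zero => rfl
      | succ s ih => rw [Function.iterate_succ_apply']; rw [ih, hp.1]
    rw [this t] at ht; exact hne ht.symm
  refine ⟨hj2, ?_⟩
  cases t with
  | zero => simp at ht; exact absurd ht.symm hne
  | succ t => exact ⟨t, by rw [← Function.iterate_succ_apply]; exact ht⟩

lemma anc_one (hp : GoodPar par) {j : ℕ} (hj : 1 ≤ j) : anc par 1 j := by
  induction j using Nat.strong_induction_on with
  | _ j ih =>
    rcases Nat.lt_or_ge j 2 with h | h
    · have : j = 1 := by omega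
      subst this; exact anc_refl 1
    · have h1 := (hp.2 j h).1
      have h2 := (hp.2 j h).2
      exact anc_step (ih (par j) h2 h1)

lemma anc_trans {i j l : ℕ} (h1 : anc par i j) (h2 : anc par j l) : anc par i l := by
  obtain ⟨t, ht⟩ := h1; obtain ⟨s, hs⟩ := h2
  exact ⟨t + s, by rw [Function.iterate_add_apply, hs, ht]⟩

/-- the set of descendants of `i` within `{1, ..., n}`. -/
noncomputable def desc (par : ℕ → ℕ) (n i : ℕ) : Finset ℕ :=
  (Finset.Icc 1 n).filter (fun j => anc par i j)

noncomputable def sz (par : ℕ → ℕ) (n i : ℕ) : ℕ := (desc par n i).card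

lemma mem_desc {n i j : ℕ} : j ∈ desc par n i ↔ (1 ≤ j ∧ j ≤ n) ∧ anc par i j := by
  simp [desc, Finset.mem_filter, Finset.mem_Icc]

lemma sz_le (n i : ℕ) : sz par n i ≤ n := by
  have : desc par n i ⊆ Finset.Icc 1 n := Finset.filter_subset _ _
  calc sz par n i ≤ (Finset.Icc 1 n).card := Finset.card_le_card this
    _ = n := by rw [Nat.card_Icc]; omega

lemma sz_pred_le (n i : ℕ) (hn : 1 ≤ n) : sz par (n - 1) i ≤ n - 1 := sz_le _ _

lemma desc_succ (hp : GoodPar par) {n : ℕ} (hn : 1 ≤ n) (i : ℕ) :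
    desc par n i = if anc par i n then insert n (desc par (n - 1) i) else desc par (n - 1) i := by
  have hIcc : Finset.Icc 1 n = insert n (Finset.Icc 1 (n - 1)) := by
    ext x; simp [Finset.mem_Icc, Finset.mem_insert]; omega
  split_ifs with h
  · ext j
    simp only [mem_desc, Finset.mem_insert]
    constructor
    · rintro ⟨⟨hj1, hjn⟩, hanc⟩
      rcases eq_or_ne j n with rfl | hne
      · exact Or.inl rfl
      · exact Or.inr ⟨⟨hj1, by omega⟩, hanc⟩
    · rintro (rfl | ⟨⟨hj1, hjn⟩, hanc⟩)
      · exact ⟨⟨hn, le_rfl⟩, h⟩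
      · exact ⟨⟨hj1, by omega⟩, hanc⟩
  · ext j
    simp only [mem_desc]
    constructor
    · rintro ⟨⟨hj1, hjn⟩, hanc⟩
      rcases eq_or_ne j n with rfl | hne
      · exact absurd hanc h
      · exact ⟨⟨hj1, by omega⟩, hanc⟩
    · rintro ⟨⟨hj1, hjn⟩, hanc⟩
      exact ⟨⟨hj1, by omega⟩, hanc⟩

lemma sz_succ (hp : GoodPar par) {n : ℕ} (hn : 1 ≤ n) (i : ℕ) :
    sz par n i = sz par (n - 1) i + (if anc par i n then 1 else 0) := by
  rw [sz, desc_succ hp hn i]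
  split_ifs with h
  · rw [Finset.card_insert_of_notMem]
    · simp [sz]
    · intro hc
      have := (mem_desc.mp hc).1.2
      omega
  · simp [sz]

lemma sz_self (hp : GoodPar par) {n : ℕ} (hn1 : 1 ≤ n) : sz par n n = 1 := by
  have hd : desc par n n = {n} := by
    ext j
    simp only [mem_desc, Finset.mem_singleton]
    constructor
    · rintro ⟨⟨hj1, hjn⟩, hanc⟩
      have := anc_le hp hj1 hanc; omega
    · rintro rfl
      exact ⟨⟨hn1, le_rfl⟩, anc_refl _⟩
  rw [sz, hd, Finset.card_singleton]

lemma anc_top_iff (hp : GoodPar par) {n i : ℕ} (hn : 2 ≤ n) (hne : i ≠ n) :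
    anc par i n ↔ anc par i (par n) := by
  constructor
  · intro h; exact (anc_of_ne hp (by omega) h hne).2
  · exact anc_step

lemma mem_own_desc (hp : GoodPar par) {n i : ℕ} (h1 : 1 ≤ i) (h2 : i ≤ n) : i ∈ desc par n i :=
  mem_desc.mpr ⟨⟨h1, h2⟩, anc_refl i⟩

/-- size of the part containing `r` when the edge above `i` is cut. -/
noncomputable def side (par : ℕ → ℕ) (n r i : ℕ) : ℕ :=
  if anc par i r then sz par n i else n - sz par n i

/-- Rooted claim: for a tree on `{1,...,n}` and a distinguished vertex `r`,
`∑_e C(side of e containing r, j) ≥ C(n, j+1)`. -/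
lemma claimR (par : ℕ → ℕ) (hp : GoodPar par) :
    ∀ n, ∀ r j, 1 ≤ j → 1 ≤ r → r ≤ n →
      Nat.choose n (j + 1) ≤ ∑ i ∈ Finset.Icc 2 n, Nat.choose (side par n r i) j := by
  intro n
  induction n using Nat.strong_induction_on with
  | _ n ih =>
  intro r j hj hr1 hrn
  rcases Nat.lt_or_ge n 2 with hn | hn
  · have h1 : Nat.choose n (j + 1) = 0 := Nat.choose_eq_zero_of_lt (by omega)
    simp [h1]
  · obtain ⟨m, rfl⟩ : ∃ m, n = m + 1 := ⟨n - 1, by omega⟩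
    have hm1 : 1 ≤ m := by omega
    have hsplit : Finset.Icc 2 (m + 1) = insert (m + 1) (Finset.Icc 2 m) := by
      ext x; simp only [Finset.mem_Icc, Finset.mem_insert]; omega
    have hnot : m + 1 ∉ Finset.Icc 2 m := by simp
    rw [hsplit, Finset.sum_insert hnot]
    have hszn : sz par (m + 1) (m + 1) = 1 := sz_self hp (by omega)
    have hpascal : Nat.choose (m + 1) (j + 1) = Nat.choose m j + Nat.choose m (j + 1) :=
      Nat.choose_succ_succ m j
    rcases eq_or_ne r (m + 1) with rfl | hrne
    · -- r is the removed leaf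
      set r' := par (m + 1) with hr'
      have hr'1 : 1 ≤ r' := (hp.2 (m + 1) hn).1
      have hr'm : r' ≤ m := by have := (hp.2 (m + 1) hn).2; omega
      have htop : side par (m + 1) (m + 1) (m + 1) = 1 := by
        rw [side, if_pos (anc_refl _), hszn]
      have hterm : ∀ i ∈ Finset.Icc 2 m,
          Nat.choose (side par (m + 1) (m + 1) i) j
            = Nat.choose (side par m r' i) j + Nat.choose (side par m r' i) (j - 1) := by
        intro i hi
        simp only [Finset.mem_Icc] at hi
        have hanc_iff : anc par i (m + 1) ↔ anc par i r' := anc_top_iff hp hn (by omega)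
        have hsz := sz_succ hp (by omega : 1 ≤ m + 1) i
        simp only [Nat.add_sub_cancel] at hsz
        have hszle : sz par m i ≤ m := sz_le m i
        have hps : ∀ s : ℕ, Nat.choose (s + 1) j = Nat.choose s j + Nat.choose s (j - 1) := by
          intro s
          obtain ⟨j', rfl⟩ : ∃ j', j = j' + 1 := ⟨j - 1, by omega⟩
          rw [Nat.choose_succ_succ s j']
          simp [Nat.add_comm]
        by_cases hA : anc par i r'
        · have hAn : anc par i (m + 1) := hanc_iff.mpr hA
          have h1 : side par (m + 1) (m + 1) i = sz par m i + 1 := by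
            rw [side, if_pos hAn, hsz, if_pos hAn]
          have h2 : side par m r' i = sz par m i := by rw [side, if_pos hA]
          rw [h1, h2, hps]
        · have hAn : ¬ anc par i (m + 1) := fun hc => hA (hanc_iff.mp hc)
          have h1 : side par (m + 1) (m + 1) i = (m - sz par m i) + 1 := by
            rw [side, if_neg hAn, hsz, if_neg hAn]
            omega
          have h2 : side par m r' i = m - sz par m i := by rw [side, if_neg hA]
          rw [h1, h2, hps]
      have hsum : ∑ i ∈ Finset.Icc 2 m, Nat.choose (side par (m + 1) (m + 1) i) j
          = (∑ i ∈ Finset.Icc 2 m, Nat.choose (side par m r' i) j)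
            + ∑ i ∈ Finset.Icc 2 m, Nat.choose (side par m r' i) (j - 1) := by
        rw [← Finset.sum_add_distrib]
        exact Finset.sum_congr rfl hterm
      have IH1 : Nat.choose m (j + 1) ≤ ∑ i ∈ Finset.Icc 2 m, Nat.choose (side par m r' i) j :=
        ih m (by omega) r' j hj hr'1 hr'm
      have IH2 : Nat.choose m j ≤ Nat.choose 1 j
          + ∑ i ∈ Finset.Icc 2 m, Nat.choose (side par m r' i) (j - 1) := by
        rcases eq_or_ne j 1 with rfl | hj2
        · have : ∀ i ∈ Finset.Icc 2 m, Nat.choose (side par m r' i) (1 - 1) = 1 := by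
            intro i _; simp
          rw [Finset.sum_congr rfl this, Finset.sum_const, Nat.card_Icc]
          simp [Nat.choose_one_right]
          omega
        · have h2 : Nat.choose m ((j - 1) + 1)
              ≤ ∑ i ∈ Finset.Icc 2 m, Nat.choose (side par m r' i) (j - 1) :=
            ih m (by omega) r' (j - 1) (by omega) hr'1 hr'm
          have : (j - 1) + 1 = j := by omega
          rw [this] at h2
          omega
      rw [htop, hsum, hpascal]
      omega
    · -- r is among the remaining vertices
      have hrm : r ≤ m := by omega
      have htop : side par (m + 1) r (m + 1) = m := by
        have hnc : ¬ anc par (m + 1) r := by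
          intro hc
          have := anc_le hp hr1 hc; omega
        rw [side, if_neg hnc, hszn]
        omega
      have hterm : ∀ i ∈ Finset.Icc 2 m,
          Nat.choose (side par m r i) j ≤ Nat.choose (side par (m + 1) r i) j := by
        intro i hi
        apply Nat.choose_le_choose
        have hsz := sz_succ hp (by omega : 1 ≤ m + 1) i
        simp only [Nat.add_sub_cancel] at hsz
        have hszle : sz par m i ≤ m := sz_le m i
        by_cases hA : anc par i r
        · rw [side, if_pos hA, side, if_pos hA]; omega
        · rw [side, if_neg hA, side, if_neg hA]
          split_ifs at hsz <;> omega
      have IH1 : Nat.choose m (j + 1) ≤ ∑ i ∈ Finset.Icc 2 m, Nat.choose (side par m r i) j :=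
        ih m (by omega) r j hj hr1 hrm
      have hle := Finset.sum_le_sum hterm
      have hCm : Nat.choose m j ≤ Nat.choose (side par (m + 1) r (m + 1)) j := by
        rw [htop]
      rw [hpascal]
      omega

/-- Unrooted claim: `∑_e (C(s_e, k) + C(n - s_e, k)) ≥ 2 C(n, k+1)`. -/
lemma claimU (par : ℕ → ℕ) (hp : GoodPar par) (k : ℕ) (hk : 2 ≤ k) :
    ∀ n, 2 * Nat.choose n (k + 1)
      ≤ ∑ i ∈ Finset.Icc 2 n, (Nat.choose (sz par n i) k + Nat.choose (n - sz par n i) k) := by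
  intro n
  induction n using Nat.strong_induction_on with
  | _ n ih =>
  rcases Nat.lt_or_ge n 2 with hn | hn
  · have h1 : Nat.choose n (k + 1) = 0 := Nat.choose_eq_zero_of_lt (by omega)
    simp [h1]
  · obtain ⟨m, rfl⟩ : ∃ m, n = m + 1 := ⟨n - 1, by omega⟩
    have hm1 : 1 ≤ m := by omega
    have hsplit : Finset.Icc 2 (m + 1) = insert (m + 1) (Finset.Icc 2 m) := by
      ext x; simp only [Finset.mem_Icc, Finset.mem_insert]; omega
    have hnot : m + 1 ∉ Finset.Icc 2 m := by simp
    rw [hsplit, Finset.sum_insert hnot]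
    have hszn : sz par (m + 1) (m + 1) = 1 := sz_self hp (by omega)
    set r' := par (m + 1) with hr'
    have hr'1 : 1 ≤ r' := (hp.2 (m + 1) hn).1
    have hr'm : r' ≤ m := by have := (hp.2 (m + 1) hn).2; omega
    have htop : Nat.choose (sz par (m + 1) (m + 1)) k
        + Nat.choose (m + 1 - sz par (m + 1) (m + 1)) k = Nat.choose m k := by
      rw [hszn, Nat.choose_eq_zero_of_lt (by omega : 1 < k)]
      simp
    have hterm : ∀ i ∈ Finset.Icc 2 m,
        Nat.choose (sz par (m + 1) i) k + Nat.choose (m + 1 - sz par (m + 1) i) k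
          = (Nat.choose (sz par m i) k + Nat.choose (m - sz par m i) k)
            + Nat.choose (side par m r' i) (k - 1) := by
      intro i hi
      simp only [Finset.mem_Icc] at hi
      have hanc_iff : anc par i (m + 1) ↔ anc par i r' := anc_top_iff hp hn (by omega)
      have hsz := sz_succ hp (by omega : 1 ≤ m + 1) i
      simp only [Nat.add_sub_cancel] at hsz
      have hszle : sz par m i ≤ m := sz_le m i
      have hps : ∀ s : ℕ, Nat.choose (s + 1) k = Nat.choose s k + Nat.choose s (k - 1) := by
        intro s
        obtain ⟨k', rfl⟩ : ∃ k', k = k' + 1 := ⟨k - 1, by omega⟩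
        rw [Nat.choose_succ_succ s k']
        simp [Nat.add_comm]
      by_cases hA : anc par i r'
      · have hAn : anc par i (m + 1) := hanc_iff.mpr hA
        rw [if_pos hAn] at hsz
        have h1 : m + 1 - sz par (m + 1) i = m - sz par m i := by omega
        rw [h1, hsz, hps, side, if_pos hA]
        ring
      · have hAn : ¬ anc par i (m + 1) := fun hc => hA (hanc_iff.mp hc)
        rw [if_neg hAn] at hsz
        have h1 : m + 1 - sz par (m + 1) i = (m - sz par m i) + 1 := by omega
        rw [h1, hsz, hps, side, if_neg hA]
        ring
    have hsum : ∑ i ∈ Finset.Icc 2 m,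
        (Nat.choose (sz par (m + 1) i) k + Nat.choose (m + 1 - sz par (m + 1) i) k)
        = (∑ i ∈ Finset.Icc 2 m, (Nat.choose (sz par m i) k + Nat.choose (m - sz par m i) k))
          + ∑ i ∈ Finset.Icc 2 m, Nat.choose (side par m r' i) (k - 1) := by
      rw [← Finset.sum_add_distrib]
      exact Finset.sum_congr rfl hterm
    have IH1 := ih m (by omega)
    have IH2 : Nat.choose m ((k - 1) + 1)
        ≤ ∑ i ∈ Finset.Icc 2 m, Nat.choose (side par m r' i) (k - 1) :=
      claimR par hp m r' (k - 1) (by omega) hr'1 hr'm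
    have hk1 : (k - 1) + 1 = k := by omega
    rw [hk1] at IH2
    have hpascal : Nat.choose (m + 1) (k + 1) = Nat.choose m k + Nat.choose m (k + 1) :=
      Nat.choose_succ_succ m k
    rw [htop, hsum, hpascal]
    omega

section Graph

variable {V : Type*} (G : SimpleGraph V)

/-- walk up the parent chain from `j` to the base vertex `b`, as a subgraph. -/
noncomputable def chain (e : ℕ → V) (par : ℕ → ℕ) (hpar : ∀ i, 2 ≤ i → par i < i) (b : ℕ) :
    ℕ → G.Subgraph
  | j =>
    if h : 2 ≤ j ∧ b < j then
      (if ha : G.Adj (e (par j)) (e j) then G.subgraphOfAdj ha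
        else G.singletonSubgraph (e b)) ⊔ chain e par hpar b (par j)
    else G.singletonSubgraph (e b)
  termination_by j => j
  decreasing_by exact hpar j h.1

lemma chain_spec (e : ℕ → V) (par : ℕ → ℕ) (hp : GoodPar par) {n : ℕ}
    (hadj : ∀ i, 2 ≤ i → i ≤ n → G.Adj (e (par i)) (e i)) {b : ℕ} (hb1 : 1 ≤ b) :
    ∀ j, 1 ≤ j → j ≤ n → anc par b j →
      (chain G e par (fun i h2 => (hp.2 i h2).2) b j).Connected ∧
      e b ∈ (chain G e par (fun i h2 => (hp.2 i h2).2) b j).verts ∧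
      e j ∈ (chain G e par (fun i h2 => (hp.2 i h2).2) b j).verts ∧
      ∀ ed ∈ (chain G e par (fun i h2 => (hp.2 i h2).2) b j).edgeSet,
        ∃ i, 2 ≤ i ∧ i ≤ n ∧ anc par b i ∧ b ≠ i ∧ anc par i j ∧ ed = s(e (par i), e i) := by
  intro j
  induction j using Nat.strong_induction_on with
  | _ j ihj =>
  intro hj1 hjn hanc
  rw [chain]
  by_cases hguard : 2 ≤ j ∧ b < j
  · rw [dif_pos hguard]
    have hbj : b ≠ j := by omega
    obtain ⟨hj2, hancp⟩ := anc_of_ne hp hj1 hanc hbj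
    have hpj1 : 1 ≤ par j := (hp.2 j hj2).1
    have hpjlt : par j < j := (hp.2 j hj2).2
    have ha : G.Adj (e (par j)) (e j) := hadj j hj2 hjn
    rw [dif_pos ha]
    obtain ⟨ihconn, ihb, ihpj, ihedge⟩ := ihj (par j) hpjlt hpj1 (by omega) hancp
    have hconn : ((G.subgraphOfAdj ha) ⊔
        chain G e par (fun i h2 => (hp.2 i h2).2) b (par j)).Connected := by
      refine SimpleGraph.Subgraph.connected_sup (SimpleGraph.Subgraph.subgraphOfAdj_connected ha).preconnected ihconn.preconnected ?_
      refine ⟨e (par j), ?_⟩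
      rw [SimpleGraph.Subgraph.verts_inf]
      exact ⟨by simp, ihpj⟩
    refine ⟨hconn, ?_, ?_, ?_⟩
    · rw [SimpleGraph.Subgraph.verts_sup]; exact Or.inr ihb
    · rw [SimpleGraph.Subgraph.verts_sup]; left; simp
    · intro ed hed
      rw [SimpleGraph.Subgraph.edgeSet_sup] at hed
      rcases hed with hed | hed
      · rw [SimpleGraph.edgeSet_subgraphOfAdj] at hed
        simp only [Set.mem_singleton_iff] at hed
        exact ⟨j, hj2, hjn, hanc, hbj, anc_refl j, hed⟩
      · obtain ⟨i, h1, h2, h3, h4, h5, h6⟩ := ihedge ed hed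
        exact ⟨i, h1, h2, h3, h4, anc_step h5, h6⟩
  · rw [dif_neg hguard]
    have hbj : b = j := by
      have hle : b ≤ j := anc_le hp hj1 hanc
      omega
    subst hbj
    refine ⟨SimpleGraph.Subgraph.singletonSubgraph_connected, by simp, by simp, ?_⟩
    intro ed hed
    rw [SimpleGraph.edgeSet_singletonSubgraph] at hed
    exact absurd hed (Set.notMem_empty ed)

lemma sup_connected {ι : Type*} {T : Finset ι} (hT : T.Nonempty) (f : ι → G.Subgraph) (x : V)
    (hconn : ∀ t ∈ T, (f t).Connected) (hx : ∀ t ∈ T, x ∈ (f t).verts) :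
    (T.sup f).Connected ∧ x ∈ (T.sup f).verts := by
  classical
  induction hT using Finset.Nonempty.cons_induction with
  | singleton a =>
    rw [Finset.sup_singleton]
    exact ⟨hconn a (Finset.mem_singleton_self a), hx a (Finset.mem_singleton_self a)⟩
  | cons a s ha hs ih =>
    rw [Finset.sup_cons]
    have hmem : ∀ t ∈ s, t ∈ Finset.cons a s ha := fun t ht => Finset.mem_cons_of_mem ht
    obtain ⟨ihc, ihx⟩ := ih (fun t ht => hconn t (hmem t ht)) (fun t ht => hx t (hmem t ht))
    have hamem : a ∈ Finset.cons a s ha := Finset.mem_cons_self a s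
    constructor
    · refine SimpleGraph.Subgraph.connected_sup (hconn a hamem).preconnected ihc.preconnected ⟨x, ?_⟩
      rw [SimpleGraph.Subgraph.verts_inf]
      exact ⟨hx a hamem, ihx⟩
    · rw [SimpleGraph.Subgraph.verts_sup]
      exact Or.inl (hx a hamem)

lemma sup_edgeSet {ι : Type*} (T : Finset ι) (f : ι → G.Subgraph) :
    (T.sup f).edgeSet ⊆ ⋃ t ∈ T, (f t).edgeSet := by
  classical
  induction T using Finset.cons_induction with
  | empty =>
    intro ed hed
    simp only [Finset.sup_empty] at hed
    have : ed ∈ (⊥ : G.Subgraph).edgeSet := hed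
    simp [SimpleGraph.Subgraph.edgeSet_bot] at this
  | cons a s ha ih =>
    rw [Finset.sup_cons]
    intro ed hed
    rw [SimpleGraph.Subgraph.edgeSet_sup] at hed
    rcases hed with hed | hed
    · exact Set.mem_biUnion (Finset.mem_cons_self a s) hed
    · obtain ⟨t, ht, h⟩ := Set.mem_iUnion₂.mp (ih hed)
      exact Set.mem_biUnion (Finset.mem_cons_of_mem ht) h

lemma sup_verts_mem {ι : Type*} (T : Finset ι) (f : ι → G.Subgraph) {t : ι} (ht : t ∈ T)
    {v : V} (hv : v ∈ (f t).verts) : v ∈ (T.sup f).verts :=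
  (Finset.le_sup ht : f t ≤ T.sup f).1 hv

end Graph

/-- The set of (indices of) tree edges separating `T`. -/
noncomputable def sepSet (par : ℕ → ℕ) (n : ℕ) (T : Finset ℕ) : Finset ℕ :=
  (Finset.Icc 2 n).filter
    (fun i => ¬(T ⊆ desc par n i ∨ ∀ t ∈ T, t ∉ desc par n i))

noncomputable def avoidSet (par : ℕ → ℕ) (n : ℕ) (T : Finset ℕ) : Finset ℕ :=
  (Finset.Icc 2 n).filter
    (fun i => T ⊆ desc par n i ∨ ∀ t ∈ T, t ∉ desc par n i)

lemma sep_avoid_card (par : ℕ → ℕ) {n : ℕ} (hn : 1 ≤ n) (T : Finset ℕ) :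
    (sepSet par n T).card + (avoidSet par n T).card = n - 1 := by
  classical
  have h := Finset.card_filter_add_card_filter_not (s := Finset.Icc 2 n)
    (p := fun i => T ⊆ desc par n i ∨ ∀ t ∈ T, t ∉ desc par n i)
  rw [Nat.card_Icc] at h
  rw [sepSet, avoidSet]
  omega

lemma exists_base (par : ℕ → ℕ) (hp : GoodPar par) {n : ℕ} (T : Finset ℕ)
    (hTsub : T ⊆ Finset.Icc 1 n) (hTne : T.Nonempty) :
    ∃ b, 1 ≤ b ∧ b ≤ n ∧ (∀ t ∈ T, anc par b t) ∧
      (∀ i, 2 ≤ i → i ≤ n → T ⊆ desc par n i → i ≤ b) := by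
  classical
  obtain ⟨t0, ht0⟩ := hTne
  have ht0Icc : 1 ≤ t0 ∧ t0 ≤ n := by have := hTsub ht0; rwa [Finset.mem_Icc] at this
  set A : Finset ℕ := (Finset.Icc 2 n).filter (fun i => T ⊆ desc par n i) with hAdef
  obtain ⟨b, hbdef⟩ : ∃ b, b = (insert 1 A).max' (Finset.insert_nonempty 1 A) := ⟨_, rfl⟩
  have hbmem : b ∈ insert 1 A := by rw [hbdef]; exact (insert 1 A).max'_mem _
  rw [Finset.mem_insert] at hbmem
  have hmemA : ∀ i, i ∈ A ↔ (2 ≤ i ∧ i ≤ n) ∧ T ⊆ desc par n i := by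
    intro i
    rw [hAdef, Finset.mem_filter, Finset.mem_Icc]
  refine ⟨b, ?_, ?_, ?_, ?_⟩
  · rcases hbmem with h | h
    · omega
    · have := ((hmemA b).mp h).1; omega
  · rcases hbmem with h | h
    · omega
    · have := ((hmemA b).mp h).1; omega
  · intro t ht
    have ht1 : 1 ≤ t := by have := hTsub ht; rw [Finset.mem_Icc] at this; omega
    rcases hbmem with h | h
    · rw [h]; exact anc_one hp ht1
    · exact (mem_desc.mp (((hmemA b).mp h).2 ht)).2
  · intro i h2 hn hsub
    have hmem : i ∈ insert 1 A := Finset.mem_insert_of_mem ((hmemA i).mpr ⟨⟨h2, hn⟩, hsub⟩)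
    rw [hbdef]
    exact Finset.le_max' _ i hmem

section Claim1

variable {V : Type*} (G : SimpleGraph V) (e : ℕ → V) (par : ℕ → ℕ) {n : ℕ}

theorem steinerDist_le_sep (hp : GoodPar par)
    (hinj : Set.InjOn e (Finset.Icc 1 n : Finset ℕ))
    (hadj : ∀ i, 2 ≤ i → i ≤ n → G.Adj (e (par i)) (e i))
    (T : Finset ℕ) (hTsub : T ⊆ Finset.Icc 1 n) (hTne : T.Nonempty) :
    sInf {m : ℕ | ∃ H : G.Subgraph, H.Connected ∧ ↑(T.image e) ⊆ H.verts ∧ H.edgeSet.ncard = m}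
      ≤ (sepSet par n T).card := by
  classical
  obtain ⟨b, hb1, hbn, hancT, hbmax⟩ := exists_base par hp T hTsub hTne
  set f : ℕ → G.Subgraph := chain G e par (fun i h2 => (hp.2 i h2).2) b with hf
  have hspec : ∀ t ∈ T, (f t).Connected ∧ e b ∈ (f t).verts ∧ e t ∈ (f t).verts ∧
      ∀ ed ∈ (f t).edgeSet, ∃ i, 2 ≤ i ∧ i ≤ n ∧ anc par b i ∧ b ≠ i ∧ anc par i t ∧
        ed = s(e (par i), e i) := by
    intro t ht
    have h1 : 1 ≤ t := by have := hTsub ht; rw [Finset.mem_Icc] at this; omega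
    have h2 : t ≤ n := by have := hTsub ht; rw [Finset.mem_Icc] at this; omega
    exact chain_spec G e par hp hadj hb1 t h1 h2 (hancT t ht)
  set H : G.Subgraph := T.sup f with hH
  obtain ⟨hHconn, -⟩ := sup_connected G hTne f (e b)
    (fun t ht => (hspec t ht).1) (fun t ht => (hspec t ht).2.1)
  have hHverts : ↑(T.image e) ⊆ H.verts := by
    intro v hv
    simp only [Finset.coe_image, Set.mem_image, Finset.mem_coe] at hv
    obtain ⟨t, ht, rfl⟩ := hv
    exact sup_verts_mem G T f ht (hspec t ht).2.2.1
  have hedge : H.edgeSet ⊆ ↑((sepSet par n T).image (fun i => s(e (par i), e i))) := by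
    intro ed hed
    obtain ⟨t, ht, hmem⟩ := Set.mem_iUnion₂.mp (sup_edgeSet G T f hed)
    obtain ⟨i, hi2, hin, hanc_bi, hbne, hanc_it, rfl⟩ := (hspec t ht).2.2.2 ed hmem
    have hiS : i ∈ sepSet par n T := by
      rw [sepSet, Finset.mem_filter, Finset.mem_Icc]
      refine ⟨⟨hi2, hin⟩, ?_⟩
      rintro (hsub | hdisj)
      · have hib : i ≤ b := hbmax i hi2 hin hsub
        have hbi : b ≤ i := anc_le hp (by omega) hanc_bi
        omega
      · have htIcc : t ∈ Finset.Icc 1 n := hTsub ht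
        rw [Finset.mem_Icc] at htIcc
        exact hdisj t ht (mem_desc.mpr ⟨⟨htIcc.1, htIcc.2⟩, hanc_it⟩)
    simp only [Finset.coe_image, Set.mem_image, Finset.mem_coe]
    exact ⟨i, hiS, rfl⟩
  calc sInf {m : ℕ | ∃ H : G.Subgraph, H.Connected ∧ ↑(T.image e) ⊆ H.verts ∧
        H.edgeSet.ncard = m}
      ≤ H.edgeSet.ncard := Nat.sInf_le ⟨H, hHconn, hHverts, rfl⟩
    _ ≤ (↑((sepSet par n T).image (fun i => s(e (par i), e i))) : Set (Sym2 V)).ncard := by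
        exact Set.ncard_le_ncard hedge (Set.toFinite _)
    _ = ((sepSet par n T).image (fun i => s(e (par i), e i))).card := Set.ncard_coe_finset _
    _ ≤ (sepSet par n T).card := Finset.card_image_le

lemma steinerDist_le_sep' (hp : GoodPar par)
    (hinj : Set.InjOn e (Finset.Icc 1 n : Finset ℕ))
    (hadj : ∀ i, 2 ≤ i → i ≤ n → G.Adj (e (par i)) (e i))
    (T : Finset ℕ) (hTsub : T ⊆ Finset.Icc 1 n) (hTne : T.Nonempty) :
    steinerDist G (T.image e) ≤ (sepSet par n T).card :=
  steinerDist_le_sep G e par hp hinj hadj T hTsub hTne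

end Claim1

lemma sum_avoid (par : ℕ → ℕ) {n k : ℕ} (hk : 1 ≤ k) :
    ∑ T ∈ Finset.powersetCard k (Finset.Icc 1 n), (avoidSet par n T).card
      = ∑ i ∈ Finset.Icc 2 n, (Nat.choose (sz par n i) k + Nat.choose (n - sz par n i) k) := by
  classical
  have hcard : ∀ T ∈ Finset.powersetCard k (Finset.Icc 1 n),
      (avoidSet par n T).card = ∑ i ∈ Finset.Icc 2 n,
        if (T ⊆ desc par n i ∨ ∀ t ∈ T, t ∉ desc par n i) then 1 else 0 := by
    intro T _
    rw [avoidSet, Finset.card_filter]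
  rw [Finset.sum_congr rfl hcard, Finset.sum_comm]
  apply Finset.sum_congr rfl
  intro i _
  have hdisj : ∀ T ∈ Finset.powersetCard k (Finset.Icc 1 n),
      ¬(T ⊆ desc par n i ∧ ∀ t ∈ T, t ∉ desc par n i) := by
    rintro T hT ⟨h1, h2⟩
    have hTc : T.card = k := (Finset.mem_powersetCard.mp hT).2
    have hne : T.Nonempty := Finset.card_pos.mp (by omega)
    obtain ⟨t, ht⟩ := hne
    exact h2 t ht (h1 ht)
  have hsplit : ∀ T ∈ Finset.powersetCard k (Finset.Icc 1 n),
      (if (T ⊆ desc par n i ∨ ∀ t ∈ T, t ∉ desc par n i) then (1 : ℕ) else 0)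
        = (if T ⊆ desc par n i then 1 else 0)
          + (if ∀ t ∈ T, t ∉ desc par n i then 1 else 0) := by
    intro T hT
    by_cases h1 : T ⊆ desc par n i <;> by_cases h2 : ∀ t ∈ T, t ∉ desc par n i
    · exact absurd ⟨h1, h2⟩ (hdisj T hT)
    all_goals simp [h1, h2]
  rw [Finset.sum_congr rfl hsplit, Finset.sum_add_distrib]
  congr 1
  · rw [← Finset.card_filter]
    have heq : (Finset.powersetCard k (Finset.Icc 1 n)).filter (fun T => T ⊆ desc par n i)
        = Finset.powersetCard k (desc par n i) := by
      ext T
      simp only [Finset.mem_filter, Finset.mem_powersetCard]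
      constructor
      · rintro ⟨⟨_, hc⟩, hsub2⟩
        exact ⟨hsub2, hc⟩
      · rintro ⟨hsub, hc⟩
        exact ⟨⟨hsub.trans (Finset.filter_subset _ _), hc⟩, hsub⟩
    rw [heq, Finset.card_powersetCard]
    rfl
  · rw [← Finset.card_filter]
    have heq : (Finset.powersetCard k (Finset.Icc 1 n)).filter
          (fun T => ∀ t ∈ T, t ∉ desc par n i)
        = Finset.powersetCard k ((Finset.Icc 1 n) \ desc par n i) := by
      ext T
      simp only [Finset.mem_filter, Finset.mem_powersetCard]
      constructor
      · rintro ⟨⟨hsub, hc⟩, hdis⟩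
        exact ⟨fun t ht => Finset.mem_sdiff.mpr ⟨hsub ht, hdis t ht⟩, hc⟩
      · rintro ⟨hsub, hc⟩
        exact ⟨⟨fun t ht => (Finset.mem_sdiff.mp (hsub ht)).1, hc⟩,
          fun t ht => (Finset.mem_sdiff.mp (hsub ht)).2⟩
    rw [heq, Finset.card_powersetCard]
    have hcs : (Finset.Icc 1 n \ desc par n i).card = n - sz par n i := by
      rw [Finset.card_sdiff_of_subset (by exact Finset.filter_subset _ _ : desc par n i ⊆ Finset.Icc 1 n),
        Nat.card_Icc]
      simp [sz]
    rw [hcs]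

section Reindex

variable {V : Type*} [Fintype V]

lemma sum_reindex (e : ℕ → V) {n : ℕ} (hn : n = Fintype.card V)
    (hinj : Set.InjOn e (Finset.Icc 1 n : Finset ℕ))
    (hsurj : ∀ v, ∃ i ∈ Finset.Icc 1 n, e i = v) (k : ℕ) (f0 : Finset V → ℕ) :
    ∑ S ∈ Finset.powersetCard k (Finset.univ : Finset V), f0 S
      = ∑ T ∈ Finset.powersetCard k (Finset.Icc 1 n), f0 (T.image e) := by
  classical
  refine Finset.sum_nbij' (i := fun S => (Finset.Icc 1 n).filter (fun t => e t ∈ S))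
    (j := fun T => T.image e) ?_ ?_ ?_ ?_ ?_
  · -- hi : maps into powersetCard k (Icc 1 n)
    intro S hS
    rw [Finset.mem_powersetCard] at hS ⊢
    refine ⟨Finset.filter_subset _ _, ?_⟩
    have himg : ((Finset.Icc 1 n).filter (fun t => e t ∈ S)).image e = S := by
      ext v
      simp only [Finset.mem_image, Finset.mem_filter]
      constructor
      · rintro ⟨t, ⟨_, htS⟩, rfl⟩
        exact htS
      · intro hv
        obtain ⟨i, hi, rfl⟩ := hsurj v
        exact ⟨i, ⟨hi, hv⟩, rfl⟩
    have hinj2 : Set.InjOn e ↑((Finset.Icc 1 n).filter (fun t => e t ∈ S)) := by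
      apply hinj.mono
      exact_mod_cast Finset.filter_subset _ _
    rw [← Finset.card_image_of_injOn hinj2, himg, hS.2]
  · intro T hT
    rw [Finset.mem_powersetCard] at hT ⊢
    refine ⟨Finset.subset_univ _, ?_⟩
    rw [Finset.card_image_of_injOn (hinj.mono (by exact_mod_cast hT.1)), hT.2]
  · intro S hS
    ext v
    simp only [Finset.mem_image, Finset.mem_filter]
    constructor
    · rintro ⟨t, ⟨_, htS⟩, rfl⟩
      exact htS
    · intro hv
      obtain ⟨i, hi, rfl⟩ := hsurj v
      exact ⟨i, ⟨hi, hv⟩, rfl⟩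
  · intro T hT
    rw [Finset.mem_powersetCard] at hT
    ext t
    simp only [Finset.mem_filter, Finset.mem_image]
    constructor
    · rintro ⟨htI, ⟨t', ht', het⟩⟩
      have ht'I : t' ∈ Finset.Icc 1 n := hT.1 ht'
      have : t' = t := hinj (by exact_mod_cast ht'I) (by exact_mod_cast htI) het
      rwa [← this]
    · intro ht
      exact ⟨hT.1 ht, ⟨t, ht, rfl⟩⟩
  · intro S hS
    congr 1
    ext v
    simp only [Finset.mem_image, Finset.mem_filter]
    constructor
    · intro hv
      obtain ⟨i, hi, rfl⟩ := hsurj v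
      exact ⟨i, ⟨hi, hv⟩, rfl⟩
    · rintro ⟨t, ⟨_, htS⟩, rfl⟩
      exact htS

lemma upper_bound_aux (G : SimpleGraph V) (e : ℕ → V) (par : ℕ → ℕ) (hp : GoodPar par)
    {n : ℕ} (hn : n = Fintype.card V)
    (hinj : Set.InjOn e (Finset.Icc 1 n : Finset ℕ))
    (hsurj : ∀ v, ∃ i ∈ Finset.Icc 1 n, e i = v)
    (hadj : ∀ i, 2 ≤ i → i ≤ n → G.Adj (e (par i)) (e i))
    (k : ℕ) (hk2 : 2 ≤ k) (hkn : k ≤ n) :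
    swk k G + 2 * Nat.choose n (k + 1) ≤ (n - 1) * Nat.choose n k := by
  classical
  have hn2 : 2 ≤ n := by omega
  rw [swk, sum_reindex e hn hinj hsurj k (steinerDist G)]
  have hstep : ∀ T ∈ Finset.powersetCard k (Finset.Icc 1 n),
      steinerDist G (T.image e) ≤ (sepSet par n T).card := by
    intro T hT
    rw [Finset.mem_powersetCard] at hT
    exact steinerDist_le_sep' G e par hp hinj hadj T hT.1
      (Finset.card_pos.mp (by omega))
  have h1 : ∑ T ∈ Finset.powersetCard k (Finset.Icc 1 n), steinerDist G (T.image e)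
      ≤ ∑ T ∈ Finset.powersetCard k (Finset.Icc 1 n), (sepSet par n T).card :=
    Finset.sum_le_sum hstep
  have h2 : ∑ T ∈ Finset.powersetCard k (Finset.Icc 1 n),
        ((sepSet par n T).card + (avoidSet par n T).card)
      = (n - 1) * Nat.choose n k := by
    have : ∀ T ∈ Finset.powersetCard k (Finset.Icc 1 n),
        (sepSet par n T).card + (avoidSet par n T).card = n - 1 := by
      intro T _
      exact sep_avoid_card par (by omega) T
    rw [Finset.sum_congr rfl this, Finset.sum_const, Finset.card_powersetCard, Nat.card_Icc,
      smul_eq_mul]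
    have : n + 1 - 1 = n := by omega
    rw [this, Nat.mul_comm]
  have h3 : 2 * Nat.choose n (k + 1)
      ≤ ∑ T ∈ Finset.powersetCard k (Finset.Icc 1 n), (avoidSet par n T).card := by
    rw [sum_avoid par (by omega)]
    exact claimU par hp k hk2 n
  rw [Finset.sum_add_distrib] at h2
  omega

end Reindex

section BFS

variable {V : Type*} [Fintype V] {G : SimpleGraph V}

lemma walk_boundary (A : Finset V) :
    ∀ {u v : V}, G.Walk u v → u ∈ A → v ∉ A → ∃ a ∈ A, ∃ b, b ∉ A ∧ G.Adj a b := by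
  intro u v w
  induction w with
  | nil => intro h1 h2; exact absurd h1 h2
  | @cons u x v h p ih =>
    intro h1 h2
    by_cases hx : x ∈ A
    · exact ih hx h2
    · exact ⟨u, h1, x, hx, h⟩

lemma exists_boundary (hG : G.Preconnected) (A : Finset V) (hA : A.Nonempty)
    (hA2 : A ≠ Finset.univ) : ∃ a ∈ A, ∃ b, b ∉ A ∧ G.Adj a b := by
  classical
  obtain ⟨a0, ha0⟩ := hA
  have hb : ∃ b0, b0 ∉ A := by
    by_contra h
    push_neg at h
    exact hA2 (Finset.eq_univ_iff_forall.mpr h)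
  obtain ⟨b0, hb0⟩ := hb
  obtain ⟨w⟩ := hG a0 b0
  exact walk_boundary A w ha0 hb0

lemma exists_bfs (hG : G.Connected) :
    ∃ (e : ℕ → V) (par : ℕ → ℕ), GoodPar par ∧
      Set.InjOn e (Finset.Icc 1 (Fintype.card V) : Finset ℕ) ∧
      (∀ v, ∃ i ∈ Finset.Icc 1 (Fintype.card V), e i = v) ∧
      (∀ i, 2 ≤ i → i ≤ Fintype.card V → G.Adj (e (par i)) (e i)) := by
  classical
  have hne : Nonempty V := hG.nonempty
  have hcard1 : 1 ≤ Fintype.card V := Fintype.card_pos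
  have claim : ∀ m, 1 ≤ m → m ≤ Fintype.card V →
      ∃ (e : ℕ → V) (par : ℕ → ℕ),
        Set.InjOn e (Finset.Icc 1 m : Finset ℕ) ∧
        (∀ i, 2 ≤ i → i ≤ m → (1 ≤ par i ∧ par i < i) ∧ G.Adj (e (par i)) (e i)) := by
    intro m hm
    induction m, hm using Nat.le_induction with
    | base =>
      intro _
      refine ⟨fun _ => Classical.arbitrary V, id, ?_, ?_⟩
      · intro x hx y hy _
        simp only [Finset.coe_Icc, Set.mem_Icc] at hx hy
        omega
      · intro i h1 h2; omega
    | succ m hm1 ih =>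
      intro hmc
      obtain ⟨e, par, hinj, hprop⟩ := ih (by omega)
      set A : Finset V := (Finset.Icc 1 m).image e with hA
      have hAcard : A.card = m := by
        rw [hA, Finset.card_image_of_injOn hinj, Nat.card_Icc]
        omega
      have hAne : A.Nonempty := by
        refine ⟨e 1, ?_⟩
        rw [hA, Finset.mem_image]
        exact ⟨1, by rw [Finset.mem_Icc]; omega, rfl⟩
      have hAuniv : A ≠ Finset.univ := by
        intro h
        rw [h, Finset.card_univ] at hAcard
        omega
      obtain ⟨a, haA, b, hbA, hab⟩ := exists_boundary hG.preconnected A hAne hAuniv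
      obtain ⟨ia, hia, hea⟩ : ∃ ia ∈ Finset.Icc 1 m, e ia = a := by
        rw [hA, Finset.mem_image] at haA
        obtain ⟨i, hi, hei⟩ := haA
        exact ⟨i, hi, hei⟩
      rw [Finset.mem_Icc] at hia
      refine ⟨Function.update e (m + 1) b, Function.update par (m + 1) ia, ?_, ?_⟩
      · intro x hx y hy hexy
        simp only [Finset.coe_Icc, Set.mem_Icc] at hx hy
        rcases eq_or_ne x (m + 1) with rfl | hxm <;> rcases eq_or_ne y (m + 1) with rfl | hym
        · rfl
        · rw [Function.update_self, Function.update_of_ne hym] at hexy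
          exfalso
          apply hbA
          rw [hA, Finset.mem_image]
          exact ⟨y, by rw [Finset.mem_Icc]; omega, hexy.symm⟩
        · rw [Function.update_self, Function.update_of_ne hxm] at hexy
          exfalso
          apply hbA
          rw [hA, Finset.mem_image]
          exact ⟨x, by rw [Finset.mem_Icc]; omega, hexy⟩
        · rw [Function.update_of_ne hxm, Function.update_of_ne hym] at hexy
          exact hinj (by simp only [Finset.coe_Icc, Set.mem_Icc]; omega)
            (by simp only [Finset.coe_Icc, Set.mem_Icc]; omega) hexy
      · intro i h2 him
        rcases eq_or_ne i (m + 1) with rfl | hi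
        · rw [Function.update_self, Function.update_self]
          refine ⟨⟨by omega, by omega⟩, ?_⟩
          rw [Function.update_of_ne (by omega : ia ≠ m + 1), hea]
          exact hab
        · have him' : i ≤ m := by omega
          obtain ⟨⟨hp1, hp2⟩, hpadj⟩ := hprop i h2 him'
          rw [Function.update_of_ne hi]
          refine ⟨⟨hp1, hp2⟩, ?_⟩
          rw [Function.update_of_ne (by omega : par i ≠ m + 1),
            Function.update_of_ne (by omega : i ≠ m + 1)]
          exact hpadj
  obtain ⟨e, par, hinj, hprop⟩ := claim (Fintype.card V) hcard1 le_rfl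
  set n := Fintype.card V
  set par' : ℕ → ℕ := fun i => if 2 ≤ i ∧ i ≤ n then par i else (if 2 ≤ i then i - 1 else 1)
    with hpar'
  have hgood : GoodPar par' := by
    constructor
    · simp [hpar']
    · intro i h2
      simp only [hpar']
      by_cases hin : i ≤ n
      · rw [if_pos ⟨h2, hin⟩]
        exact (hprop i h2 hin).1
      · rw [if_neg (by intro hc; exact hin hc.2), if_pos h2]
        omega
  refine ⟨e, par', hgood, hinj, ?_, ?_⟩
  · -- surjectivity
    intro v
    by_contra h
    push_neg at h
    have hv : v ∉ (Finset.Icc 1 n).image e := by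
      rw [Finset.mem_image]
      rintro ⟨i, hi, rfl⟩
      exact h i hi rfl
    have hcard : ((Finset.Icc 1 n).image e).card = n := by
      rw [Finset.card_image_of_injOn hinj, Nat.card_Icc]
      omega
    have hsub : (Finset.Icc 1 n).image e ⊆ Finset.univ.erase v := by
      intro x hx
      rcases eq_or_ne x v with rfl | hxv
      · exact absurd hx hv
      · exact Finset.mem_erase.mpr ⟨hxv, Finset.mem_univ x⟩
    have := Finset.card_le_card hsub
    rw [hcard, Finset.card_erase_of_mem (Finset.mem_univ v), Finset.card_univ] at this
    omega
  · intro i h2 hin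
    have : par' i = par i := by
      simp only [hpar']
      rw [if_pos ⟨h2, hin⟩]
    rw [this]
    exact (hprop i h2 hin).2

end BFS

lemma final_arith_le {n k A : ℕ} (hk2 : 2 ≤ k) (hkn : k ≤ n)
    (h : A + 2 * Nat.choose n (k + 1) ≤ (n - 1) * Nat.choose n k) :
    (k + 1) * A ≤ (k - 1) * (n + 1) * Nat.choose n k := by
  have hcs : Nat.choose n (k + 1) * (k + 1) = Nat.choose n k * (n - k) :=
    Nat.choose_succ_right_eq n k
  have h1 : (k + 1) * A + (k + 1) * (2 * Nat.choose n (k + 1))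
      ≤ (k + 1) * ((n - 1) * Nat.choose n k) := by
    rw [← Nat.mul_add]
    exact Nat.mul_le_mul_left (k + 1) h
  have h2 : (k + 1) * (2 * Nat.choose n (k + 1)) = 2 * (Nat.choose n k * (n - k)) := by
    rw [← hcs]; ring
  have h3 : (k + 1) * ((n - 1) * Nat.choose n k)
      = (k - 1) * (n + 1) * Nat.choose n k + 2 * (Nat.choose n k * (n - k)) := by
    obtain ⟨k', rfl⟩ : ∃ k', k = k' + 2 := ⟨k - 2, by omega⟩
    obtain ⟨d, rfl⟩ : ∃ d, n = k' + 2 + d := ⟨n - (k' + 2), by omega⟩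
    have e1 : k' + 2 + d - 1 = k' + 1 + d := by omega
    have e2 : k' + 2 - 1 = k' + 1 := by omega
    have e3 : k' + 2 + d - (k' + 2) = d := by omega
    rw [e1, e2, e3]
    ring
  rw [h2] at h1
  rw [h3] at h1
  omega

lemma final_arith_eq {n k A : ℕ} (hk2 : 2 ≤ k) (hkn : k ≤ n)
    (h : A + 2 * Nat.choose n (k + 1) = (n - 1) * Nat.choose n k) :
    (k + 1) * A = (k - 1) * (n + 1) * Nat.choose n k := by
  have hcs : Nat.choose n (k + 1) * (k + 1) = Nat.choose n k * (n - k) :=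
    Nat.choose_succ_right_eq n k
  have h1 : (k + 1) * A + (k + 1) * (2 * Nat.choose n (k + 1))
      = (k + 1) * ((n - 1) * Nat.choose n k) := by
    rw [← Nat.mul_add, h]
  have h2 : (k + 1) * (2 * Nat.choose n (k + 1)) = 2 * (Nat.choose n k * (n - k)) := by
    rw [← hcs]; ring
  have h3 : (k + 1) * ((n - 1) * Nat.choose n k)
      = (k - 1) * (n + 1) * Nat.choose n k + 2 * (Nat.choose n k * (n - k)) := by
    obtain ⟨k', rfl⟩ : ∃ k', k = k' + 2 := ⟨k - 2, by omega⟩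
    obtain ⟨d, rfl⟩ : ∃ d, n = k' + 2 + d := ⟨n - (k' + 2), by omega⟩
    have e1 : k' + 2 + d - 1 = k' + 1 + d := by omega
    have e2 : k' + 2 - 1 = k' + 1 := by omega
    have e3 : k' + 2 + d - (k' + 2) = d := by omega
    rw [e1, e2, e3]
    ring
  rw [h2, h3] at h1
  omega

section Lower

variable {V : Type*} [Fintype V]

lemma edges_lower {G : SimpleGraph V} (hG : G.Connected) :
    Fintype.card V ≤ G.edgeSet.ncard + 1 := by
  classical
  have hnev : Nonempty V := hG.nonempty
  have hpos : 1 ≤ Fintype.card V := Fintype.card_pos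
  obtain ⟨e, par, hgood, hinj, hsurj, hadj⟩ := exists_bfs hG
  set n := Fintype.card V with hn
  set F : ℕ → Sym2 V := fun i => s(e (par i), e i) with hF
  have hmemIcc : ∀ i, 2 ≤ i → i ≤ n → (par i ∈ (Finset.Icc 1 n : Finset ℕ) ∧
      i ∈ (Finset.Icc 1 n : Finset ℕ)) := by
    intro i h2 hin
    have h1 := (hgood.2 i h2).1
    have h2' := (hgood.2 i h2).2
    constructor <;> rw [Finset.mem_Icc] <;> omega
  have hsub : ↑((Finset.Icc 2 n).image F) ⊆ G.edgeSet := by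
    intro ed hed
    simp only [Finset.coe_image, Set.mem_image, Finset.mem_coe, Finset.mem_Icc] at hed
    obtain ⟨i, ⟨h2, hin⟩, rfl⟩ := hed
    exact (hadj i h2 hin)
  have hinj2 : Set.InjOn F (Finset.Icc 2 n : Finset ℕ) := by
    intro x hx y hy hxy
    simp only [Finset.coe_Icc, Set.mem_Icc] at hx hy
    have hxmem := hmemIcc x hx.1 hx.2
    have hymem := hmemIcc y hy.1 hy.2
    have hpx := (hgood.2 x hx.1).2
    have hpy := (hgood.2 y hy.1).2
    rw [hF] at hxy
    simp only [Sym2.eq, Sym2.rel_iff', Prod.mk.injEq, Prod.swap_prod_mk] at hxy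
    rcases hxy with ⟨h1, h2⟩ | ⟨h1, h2⟩
    · exact hinj (by exact_mod_cast hxmem.2) (by exact_mod_cast hymem.2) h2
    · have hxy1 : x = par y := hinj (by exact_mod_cast hxmem.2)
        (by exact_mod_cast hymem.1) h2
      have hxy2 : par x = y := hinj (by exact_mod_cast hxmem.1)
        (by exact_mod_cast hymem.2) h1
      omega
  have hcard : ((Finset.Icc 2 n).image F).card = n - 1 := by
    rw [Finset.card_image_of_injOn hinj2, Nat.card_Icc]
    omega
  have h1 : ((Finset.Icc 2 n).image F : Set (Sym2 V)).ncard ≤ G.edgeSet.ncard :=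
    Set.ncard_le_ncard hsub (Set.toFinite _)
  rw [Set.ncard_coe_finset, hcard] at h1
  omega

lemma verts_le_edges {G : SimpleGraph V} (H : G.Subgraph) (hH : H.Connected) :
    H.verts.ncard ≤ H.edgeSet.ncard + 1 := by
  classical
  have hconn : H.coe.Connected := SimpleGraph.Subgraph.connected_iff'.mp hH
  have h1 : Fintype.card H.verts ≤ H.coe.edgeSet.ncard + 1 := edges_lower hconn
  have h2 : H.verts.ncard = Fintype.card H.verts := by
    rw [Set.ncard_eq_toFinset_card', Set.toFinset_card]
  have h3 : H.edgeSet.ncard = H.coe.edgeSet.ncard := by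
    rw [← SimpleGraph.Subgraph.image_coe_edgeSet_coe H]
    exact Set.ncard_image_of_injective _ (Sym2.map.injective Subtype.val_injective)
  omega

lemma pathGraph_walk_covers {n : ℕ} :
    ∀ {u v : Fin n} (w : (SimpleGraph.pathGraph n).Walk u v) (x : Fin n),
      ((u.val ≤ x.val ∧ x.val ≤ v.val) ∨ (v.val ≤ x.val ∧ x.val ≤ u.val)) →
      x ∈ w.support
  | u, _, SimpleGraph.Walk.nil, x, hx => by
    have hxu : x = u := by
      apply Fin.ext
      rcases hx with ⟨h1, h2⟩ | ⟨h1, h2⟩ <;> omega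
    rw [hxu]
    exact SimpleGraph.Walk.start_mem_support _
  | u, v, SimpleGraph.Walk.cons h p, x, hx => by
    rcases eq_or_ne x u with rfl | hxa
    · exact SimpleGraph.Walk.start_mem_support _
    · have hval : x.val ≠ u.val := fun hc => hxa (Fin.ext hc)
      have hadj := SimpleGraph.pathGraph_adj.mp h
      rw [SimpleGraph.Walk.support_cons]
      refine List.mem_cons_of_mem _ (pathGraph_walk_covers p x ?_)
      omega

lemma steiner_ge_interval {G : SimpleGraph V} (hG : G.Connected)
    (φ : G ≃g SimpleGraph.pathGraph (Fintype.card V)) (S : Finset V)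
    (x y : V) (hxS : x ∈ S) (hyS : y ∈ S) :
    (φ x).val - (φ y).val ≤ steinerDist G S := by
  classical
  have hnev : Nonempty V := hG.nonempty
  have hn0 : 0 < Fintype.card V := Fintype.card_pos
  set M := (φ x).val with hM
  set m := (φ y).val with hm
  rcases Nat.lt_or_ge M m with hlt | hge
  · omega
  have hmM : m ≤ M := hge
  have hsetne : {m' : ℕ | ∃ H : G.Subgraph, H.Connected ∧ ↑S ⊆ H.verts ∧
      H.edgeSet.ncard = m'}.Nonempty := by
    refine ⟨(⊤ : G.Subgraph).edgeSet.ncard, ⟨⊤, ?_, by simp, rfl⟩⟩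
    rw [SimpleGraph.Subgraph.connected_iff']
    exact (SimpleGraph.Subgraph.topIso.connected_iff).mpr hG
  obtain ⟨H, hHconn, hHsub, hHcard⟩ := Nat.sInf_mem hsetne
  have hHcard' : H.edgeSet.ncard = steinerDist G S := hHcard
  have hMn : M < Fintype.card V := (φ x).isLt
  have hvmH : y ∈ H.verts := hHsub (by exact_mod_cast hyS)
  have hvMH : x ∈ H.verts := hHsub (by exact_mod_cast hxS)
  have hreach : H.coe.Reachable ⟨y, hvmH⟩ ⟨x, hvMH⟩ :=
    (SimpleGraph.Subgraph.connected_iff'.mp hHconn).preconnected _ _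
  obtain ⟨p⟩ := hreach
  set ψ : H.coe →g SimpleGraph.pathGraph (Fintype.card V) := φ.toHom.comp H.hom with hψ
  have hcover : ∀ c, ∀ hcn : c < Fintype.card V, m ≤ c → c ≤ M →
      ∃ a : H.verts, a ∈ p.support ∧ φ (a : V) = ⟨c, hcn⟩ := by
    intro c hcn hc1 hc2
    have hx : (⟨c, hcn⟩ : Fin (Fintype.card V)) ∈ (p.map ψ).support := by
      apply pathGraph_walk_covers (p.map ψ)
      left
      constructor
      · show (ψ ⟨y, hvmH⟩).val ≤ c
        have hee : (ψ ⟨y, hvmH⟩) = φ y := rfl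
        rw [hee, ← hm]
        exact hc1
      · show c ≤ (ψ ⟨x, hvMH⟩).val
        have hee : (ψ ⟨x, hvMH⟩) = φ x := rfl
        rw [hee, ← hM]
        exact hc2
    rw [SimpleGraph.Walk.support_map, List.mem_map] at hx
    obtain ⟨a, ha, hax⟩ := hx
    exact ⟨a, ha, hax⟩
  set F : ℕ → V := fun c => φ.symm ⟨c % Fintype.card V, Nat.mod_lt _ hn0⟩ with hF
  have hFsub : ↑((Finset.Icc m M).image F) ⊆ H.verts := by
    intro v hv
    simp only [Finset.coe_image, Set.mem_image, Finset.mem_coe, Finset.mem_Icc] at hv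
    obtain ⟨c, ⟨hc1, hc2⟩, rfl⟩ := hv
    have hcn : c < Fintype.card V := by omega
    obtain ⟨a, haspt, hac⟩ := hcover c hcn hc1 hc2
    have hmod : c % Fintype.card V = c := Nat.mod_eq_of_lt hcn
    have hFa : F c = (a : V) := by
      rw [hF]
      simp only
      rw [show (⟨c % Fintype.card V, Nat.mod_lt _ hn0⟩ : Fin (Fintype.card V))
        = ⟨c, hcn⟩ from Fin.ext hmod, ← hac]
      exact φ.toEquiv.symm_apply_apply _
    rw [hFa]
    exact a.2
  have hFinj : Set.InjOn F (Finset.Icc m M : Finset ℕ) := by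
    intro a ha b hb hab
    simp only [Finset.coe_Icc, Set.mem_Icc] at ha hb
    have han : a % Fintype.card V = a := Nat.mod_eq_of_lt (by omega)
    have hbn : b % Fintype.card V = b := Nat.mod_eq_of_lt (by omega)
    rw [hF] at hab
    simp only at hab
    have hinj := φ.toEquiv.symm.injective hab
    rw [Fin.mk.injEq, han, hbn] at hinj
    exact hinj
  have hIcccard : (Finset.Icc m M).card = M - m + 1 := by
    rw [Nat.card_Icc]
    omega
  have hverts : M - m + 1 ≤ H.verts.ncard := by
    have h1 : ((Finset.Icc m M).image F : Set V).ncard ≤ H.verts.ncard :=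
      Set.ncard_le_ncard hFsub (Set.toFinite _)
    rw [Set.ncard_coe_finset, Finset.card_image_of_injOn hFinj, hIcccard] at h1
    exact h1
  have hedges := verts_le_edges H hHconn
  omega

end Lower

/-! ### The path case -/

def pathPar : ℕ → ℕ := fun i => if 2 ≤ i then i - 1 else 1

lemma pathPar_good : GoodPar pathPar := by
  constructor
  · simp [pathPar]
  · intro i h2
    simp only [pathPar, if_pos h2]
    omega

lemma pathPar_eq {i : ℕ} (h : 2 ≤ i) : pathPar i = i - 1 := by
  simp only [pathPar, if_pos h]

lemma anc_pathPar_of_le : ∀ j, 1 ≤ j → ∀ i, 1 ≤ i → i ≤ j → anc pathPar i j := by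
  intro j
  induction j using Nat.strong_induction_on with
  | _ j ih =>
    intro hj i h1 h2
    rcases eq_or_ne i j with rfl | hne
    · exact anc_refl i
    · have hj2 : 2 ≤ j := by omega
      have hstep : anc pathPar i (j - 1) := ih (j - 1) (by omega) (by omega) i h1 (by omega)
      apply anc_step
      rwa [pathPar_eq hj2]

lemma desc_pathPar (n i : ℕ) (hi : 1 ≤ i) : desc pathPar n i = Finset.Icc i n := by
  ext j
  simp only [mem_desc, Finset.mem_Icc]
  constructor
  · rintro ⟨⟨hj1, hjn⟩, hanc⟩
    exact ⟨anc_le pathPar_good hj1 hanc, hjn⟩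
  · rintro ⟨h1, h2⟩
    exact ⟨⟨by omega, h2⟩, anc_pathPar_of_le j (by omega) i hi h1⟩

lemma sz_pathPar (n i : ℕ) (hi : 1 ≤ i) : sz pathPar n i = n + 1 - i := by
  rw [sz, desc_pathPar n i hi, Nat.card_Icc]

lemma sep_card_path {n : ℕ} (T : Finset ℕ) (hTsub : T ⊆ Finset.Icc 1 n) (hTne : T.Nonempty) :
    (sepSet pathPar n T).card = T.max' hTne - T.min' hTne := by
  classical
  have hminT := T.min'_mem hTne
  have hmaxT := T.max'_mem hTne
  have hminI : 1 ≤ T.min' hTne ∧ T.min' hTne ≤ n := by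
    have := hTsub hminT; rwa [Finset.mem_Icc] at this
  have hmaxI : 1 ≤ T.max' hTne ∧ T.max' hTne ≤ n := by
    have := hTsub hmaxT; rwa [Finset.mem_Icc] at this
  have heq : sepSet pathPar n T = Finset.Icc (T.min' hTne + 1) (T.max' hTne) := by
    ext i
    rw [sepSet, Finset.mem_filter, Finset.mem_Icc, Finset.mem_Icc]
    constructor
    · rintro ⟨⟨h2, hn'⟩, hsep⟩
      rw [desc_pathPar n i (by omega)] at hsep
      push_neg at hsep
      obtain ⟨hns, t, ht, htmem⟩ := hsep
      rw [Finset.not_subset] at hns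
      obtain ⟨t', ht', ht'n⟩ := hns
      have ht'I : 1 ≤ t' ∧ t' ≤ n := by
        have := hTsub ht'; rwa [Finset.mem_Icc] at this
      have ht'lt : t' < i := by
        rw [Finset.mem_Icc] at ht'n
        omega
      have hm1 := Finset.min'_le T t' ht'
      have hm2 := Finset.le_max' T t ht
      rw [Finset.mem_Icc] at htmem
      omega
    · rintro ⟨h1, h2⟩
      refine ⟨⟨by omega, by omega⟩, ?_⟩
      rw [desc_pathPar n i (by omega)]
      rintro (hsub | hdisj)
      · have := hsub hminT
        rw [Finset.mem_Icc] at this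
        omega
      · exact hdisj (T.max' hTne) hmaxT (Finset.mem_Icc.mpr ⟨h2, by omega⟩)
  rw [heq, Nat.card_Icc]
  omega

lemma path_avoid (n k : ℕ) (hn : 1 ≤ n) (hk : 1 ≤ k) :
    ∑ i ∈ Finset.Icc 2 n,
        (Nat.choose (sz pathPar n i) k + Nat.choose (n - sz pathPar n i) k)
      = 2 * Nat.choose n (k + 1) := by
  classical
  have hterm : ∀ i ∈ Finset.Icc 2 n,
      Nat.choose (sz pathPar n i) k + Nat.choose (n - sz pathPar n i) k
        = Nat.choose (n + 1 - i) k + Nat.choose (i - 1) k := by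
    intro i hi
    rw [Finset.mem_Icc] at hi
    have h1 : sz pathPar n i = n + 1 - i := sz_pathPar n i (by omega)
    have h2 : n - (n + 1 - i) = i - 1 := by omega
    rw [h1, h2]
  rw [Finset.sum_congr rfl hterm, Finset.sum_add_distrib]
  have hhockey : ∑ j ∈ Finset.Icc 1 (n - 1), Nat.choose j k = Nat.choose n (k + 1) := by
    have hsub : Finset.Icc k (n - 1) ⊆ Finset.Icc 1 (n - 1) := by
      intro x hx
      rw [Finset.mem_Icc] at hx ⊢
      omega
    rw [← Finset.sum_subset hsub (fun x hx hnx => Nat.choose_eq_zero_of_lt (by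
      rw [Finset.mem_Icc] at hx
      rw [Finset.mem_Icc] at hnx
      omega))]
    rw [Nat.sum_Icc_choose]
    have : n - 1 + 1 = n := by omega
    rw [this]
  have hA : ∑ i ∈ Finset.Icc 2 n, Nat.choose (n + 1 - i) k = Nat.choose n (k + 1) := by
    rw [← hhockey]
    refine Finset.sum_nbij' (i := fun i => n + 1 - i) (j := fun j => n + 1 - j)
      ?_ ?_ ?_ ?_ ?_
    · intro a ha; simp only [Finset.mem_Icc] at ha ⊢; omega
    · intro a ha; simp only [Finset.mem_Icc] at ha ⊢; omega
    · intro a ha; simp only [Finset.mem_Icc] at ha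
      show n + 1 - (n + 1 - a) = a
      omega
    · intro a ha; simp only [Finset.mem_Icc] at ha
      show n + 1 - (n + 1 - a) = a
      omega
    · intro a _; rfl
  have hB : ∑ i ∈ Finset.Icc 2 n, Nat.choose (i - 1) k = Nat.choose n (k + 1) := by
    rw [← hhockey]
    refine Finset.sum_nbij' (i := fun i => i - 1) (j := fun j => j + 1)
      ?_ ?_ ?_ ?_ ?_
    · intro a ha; simp only [Finset.mem_Icc] at ha ⊢; omega
    · intro a ha; simp only [Finset.mem_Icc] at ha ⊢; omega
    · intro a ha; simp only [Finset.mem_Icc] at ha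
      show a - 1 + 1 = a
      omega
    · intro a ha; simp only [Finset.mem_Icc] at ha
      show a + 1 - 1 = a
      omega
    · intro a _; rfl
  rw [hA, hB]
  ring

section PathEq

variable {V : Type*} [Fintype V]

lemma path_equality (G : SimpleGraph V) (hG : G.Connected)
    (φ : G ≃g SimpleGraph.pathGraph (Fintype.card V)) (k : ℕ) (hk2 : 2 ≤ k)
    (hkn : k ≤ Fintype.card V) :
    swk k G + 2 * Nat.choose (Fintype.card V) (k + 1)
      = (Fintype.card V - 1) * Nat.choose (Fintype.card V) k := by
  classical
  have hnev : Nonempty V := hG.nonempty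
  have hn0 : 0 < Fintype.card V := Fintype.card_pos
  have hn2 : 2 ≤ Fintype.card V := le_trans hk2 hkn
  set pe : ℕ → V := fun i => φ.symm ⟨(i - 1) % Fintype.card V, Nat.mod_lt _ hn0⟩ with hpe
  have hmod : ∀ i, 1 ≤ i → i ≤ Fintype.card V → (i - 1) % Fintype.card V = i - 1 :=
    fun i h1 h2 => Nat.mod_eq_of_lt (by omega)
  have hphipe : ∀ i, 1 ≤ i → i ≤ Fintype.card V → (φ (pe i)).val = i - 1 := by
    intro i h1 h2
    have h3 : φ (pe i) = ⟨(i - 1) % Fintype.card V, Nat.mod_lt _ hn0⟩ := by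
      rw [hpe]
      exact φ.apply_symm_apply _
    rw [h3]
    exact hmod i h1 h2
  have hinj : Set.InjOn pe (Finset.Icc 1 (Fintype.card V) : Finset ℕ) := by
    intro x hx y hy hxy
    simp only [Finset.coe_Icc, Set.mem_Icc] at hx hy
    rw [hpe] at hxy
    simp only at hxy
    have h := φ.toEquiv.symm.injective hxy
    rw [Fin.mk.injEq, hmod x hx.1 hx.2, hmod y hy.1 hy.2] at h
    omega
  have hsurj : ∀ v, ∃ i ∈ Finset.Icc 1 (Fintype.card V), pe i = v := by
    intro v
    refine ⟨(φ v).val + 1, ?_, ?_⟩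
    · rw [Finset.mem_Icc]
      have := (φ v).isLt
      omega
    · rw [hpe]
      simp only [Nat.add_sub_cancel]
      rw [show (⟨(φ v).val % Fintype.card V, Nat.mod_lt _ hn0⟩ : Fin (Fintype.card V))
        = φ v from Fin.ext (by simp [Nat.mod_eq_of_lt (φ v).isLt])]
      exact φ.toEquiv.symm_apply_apply v
  have hadj : ∀ i, 2 ≤ i → i ≤ Fintype.card V → G.Adj (pe (pathPar i)) (pe i) := by
    intro i h2 hin
    rw [pathPar_eq h2]
    rw [hpe]
    simp only
    rw [φ.symm.map_adj_iff]
    rw [SimpleGraph.pathGraph_adj]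
    left
    simp only
    rw [hmod (i - 1) (by omega) (by omega), hmod i (by omega) hin]
    omega
  have h0 : swk k G = ∑ T ∈ Finset.powersetCard k (Finset.Icc 1 (Fintype.card V)),
      steinerDist G (T.image pe) := by
    rw [swk]
    exact sum_reindex pe rfl hinj hsurj k (steinerDist G)
  have hpoint : ∀ T ∈ Finset.powersetCard k (Finset.Icc 1 (Fintype.card V)),
      steinerDist G (T.image pe) = (sepSet pathPar (Fintype.card V) T).card := by
    intro T hT
    rw [Finset.mem_powersetCard] at hT
    have hTne : T.Nonempty := Finset.card_pos.mp (by omega)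
    apply le_antisymm
    · exact steinerDist_le_sep' G pe pathPar pathPar_good hinj hadj T hT.1 hTne
    · rw [sep_card_path T hT.1 hTne]
      have hmaxm := T.max'_mem hTne
      have hminm := T.min'_mem hTne
      have hmaxI : 1 ≤ T.max' hTne ∧ T.max' hTne ≤ Fintype.card V := by
        have := hT.1 hmaxm; rwa [Finset.mem_Icc] at this
      have hminI : 1 ≤ T.min' hTne ∧ T.min' hTne ≤ Fintype.card V := by
        have := hT.1 hminm; rwa [Finset.mem_Icc] at this
      have hgeq := steiner_ge_interval hG φ (T.image pe)
        (pe (T.max' hTne)) (pe (T.min' hTne))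
        (Finset.mem_image_of_mem pe hmaxm) (Finset.mem_image_of_mem pe hminm)
      rw [hphipe _ hmaxI.1 hmaxI.2, hphipe _ hminI.1 hminI.2] at hgeq
      omega
  have h1 : swk k G = ∑ T ∈ Finset.powersetCard k (Finset.Icc 1 (Fintype.card V)),
      (sepSet pathPar (Fintype.card V) T).card := by
    rw [h0]
    exact Finset.sum_congr rfl hpoint
  have h2 : (∑ T ∈ Finset.powersetCard k (Finset.Icc 1 (Fintype.card V)),
        (sepSet pathPar (Fintype.card V) T).card)
      + (∑ T ∈ Finset.powersetCard k (Finset.Icc 1 (Fintype.card V)),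
        (avoidSet pathPar (Fintype.card V) T).card)
      = (Fintype.card V - 1) * Nat.choose (Fintype.card V) k := by
    rw [← Finset.sum_add_distrib]
    have hc : ∀ T ∈ Finset.powersetCard k (Finset.Icc 1 (Fintype.card V)),
        (sepSet pathPar (Fintype.card V) T).card + (avoidSet pathPar (Fintype.card V) T).card
          = Fintype.card V - 1 := by
      intro T _
      exact sep_avoid_card pathPar (by omega) T
    rw [Finset.sum_congr rfl hc, Finset.sum_const, Finset.card_powersetCard, Nat.card_Icc,
      smul_eq_mul]
    have he : Fintype.card V + 1 - 1 = Fintype.card V := by omega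
    rw [he, Nat.mul_comm]
  have h3 : ∑ T ∈ Finset.powersetCard k (Finset.Icc 1 (Fintype.card V)),
      (avoidSet pathPar (Fintype.card V) T).card = 2 * Nat.choose (Fintype.card V) (k + 1) := by
    rw [sum_avoid pathPar (by omega)]
    exact path_avoid (Fintype.card V) k (by omega) (by omega)
  omega

end PathEq

end SWAux

/-- If G is connected of order n and 2 ≤ k ≤ n then
SW_k(G) ≤ ((k-1)(n+1)/(k+1))·C(n,k), with equality when G is a path.
(Stated multiplied through by (k+1).) -/
theorem steiner_wiener_upper_bound {V : Type*} [Fintype V] (G : SimpleGraph V)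
    (hG : G.Connected) (k : ℕ) (hk2 : 2 ≤ k) (hkn : k ≤ Fintype.card V) :
    (k + 1) * swk k G ≤ (k - 1) * (Fintype.card V + 1) * Nat.choose (Fintype.card V) k ∧
    (Nonempty (G ≃g SimpleGraph.pathGraph (Fintype.card V)) →
      (k + 1) * swk k G = (k - 1) * (Fintype.card V + 1) * Nat.choose (Fintype.card V) k) := by
  constructor
  · obtain ⟨e, par, hgood, hinj, hsurj, hadj⟩ := SWAux.exists_bfs hG
    exact SWAux.final_arith_le hk2 hkn
      (SWAux.upper_bound_aux G e par hgood rfl hinj hsurj hadj k hk2 hkn)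
  · rintro ⟨φ⟩
    exact SWAux.final_arith_eq hk2 hkn (SWAux.path_equality G hG φ k hk2 hkn)
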